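/- ∑_{n≥0} d(n) q^n = (1 - q² + q³)/(1 - q - 2q² + 2q³) as formal power series, where d(n) = ∑_{k≥0} w(n-k,k). -/

import Mathlib

/-- A composition of `n`: a list of positive integers summing to `n`. -/
def IsComposition (n : ℕ) (l : List ℕ) : Prop :=
  (∀ x ∈ l, 0 < x) ∧ l.sum = n

/-- All parts of the list lie in {1, 2}. -/
def Parts12 (l : List ℕ) : Prop := ∀ x ∈ l, x = 1 ∨ x = 2

/-- Number of water cells: parts equal to 1 with a part 2 strictly before
and a part 2 strictly after. -/
noncomputable def waterCells (l : List ℕ) : ℕ :=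
  {i : Fin l.length | l.get i = 1 ∧ (∃ j : Fin l.length, j < i ∧ l.get j = 2) ∧
    (∃ j : Fin l.length, i < j ∧ l.get j = 2)}.ncard

/-- `w n k`: number of compositions of `n` with parts in {1,2} and exactly `k` water cells. -/
noncomputable def w (n k : ℕ) : ℕ :=
  {l : List ℕ | Parts12 l ∧ l.sum = n ∧ waterCells l = k}.ncard

/-- Diagonal sums of the water-cell array. -/
noncomputable def d (n : ℕ) : ℕ := ∑ k ∈ Finset.range (n + 1), w (n - k) k

/-- All internal parts (other than the first and last) are even. -/
def InternalEven (l : List ℕ) : Prop := ∀ x ∈ (l.drop 1).dropLast, Even x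

/-- The power series variable, as a formal power series over ℚ. -/
noncomputable def q : PowerSeries ℚ := PowerSeries.X

/-! ### auxiliary -/

noncomputable def g (l : List ℕ) : ℕ :=
  {i : Fin l.length | l.get i = 1 ∧ ∃ j : Fin l.length, i < j ∧ l.get j = 2}.ncard

open Classical in
lemma ncard_fin_succ {n : ℕ} (P : Fin (n+1) → Prop) :
    {i | P i}.ncard = (if P 0 then 1 else 0) + {i : Fin n | P i.succ}.ncard := by
  classical
  rw [Set.ncard_eq_toFinset_card', Set.ncard_eq_toFinset_card']
  simp only [Set.toFinset_setOf]
  rw [Finset.card_filter, Finset.card_filter, Fin.sum_univ_succ]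

lemma get_cons_succ' (a : ℕ) (l : List ℕ) (i : Fin l.length) :
    (a :: l).get i.succ = l.get i := rfl

lemma water_nil : waterCells [] = 0 := by simp [waterCells]

lemma g_nil : g [] = 0 := by simp [g]

lemma water_cons1 (l : List ℕ) : waterCells (1 :: l) = waterCells l := by
  rw [waterCells, waterCells]
  simp only [List.length_cons]
  rw [ncard_fin_succ]
  split_ifs with h0
  · exfalso
    obtain ⟨-, ⟨j, hj, -⟩, -⟩ := h0
    exact absurd hj (by simp)
  · rw [zero_add]
    congr 1
    ext i
    simp only [Set.mem_setOf_eq, get_cons_succ']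
    constructor
    · rintro ⟨h1, ⟨j, hj, hj2⟩, ⟨j', hj', hj'2⟩⟩
      refine ⟨h1, ?_, ?_⟩
      · rcases Fin.eq_zero_or_eq_succ j with rfl | ⟨j0, rfl⟩
        · simp at hj2
        · exact ⟨j0, by simpa [Fin.succ_lt_succ_iff] using hj,
            by simpa [get_cons_succ'] using hj2⟩
      · rcases Fin.eq_zero_or_eq_succ j' with rfl | ⟨j0, rfl⟩
        · exact absurd hj' (by simp)
        · exact ⟨j0, by simpa [Fin.succ_lt_succ_iff] using hj',
            by simpa [get_cons_succ'] using hj'2⟩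
    · rintro ⟨h1, ⟨j, hj, hj2⟩, ⟨j', hj', hj'2⟩⟩
      exact ⟨h1, ⟨j.succ, by simpa [Fin.succ_lt_succ_iff] using hj,
          by simpa [get_cons_succ'] using hj2⟩,
        ⟨j'.succ, by simpa [Fin.succ_lt_succ_iff] using hj',
          by simpa [get_cons_succ'] using hj'2⟩⟩

lemma water_cons2 (l : List ℕ) : waterCells (2 :: l) = g l := by
  rw [waterCells, g]
  simp only [List.length_cons]
  rw [ncard_fin_succ]
  split_ifs with h0
  · exfalso
    exact absurd h0.1 (by simp)
  · rw [zero_add]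
    congr 1
    ext i
    simp only [Set.mem_setOf_eq, get_cons_succ']
    constructor
    · rintro ⟨h1, -, ⟨j', hj', hj'2⟩⟩
      refine ⟨h1, ?_⟩
      rcases Fin.eq_zero_or_eq_succ j' with rfl | ⟨j0, rfl⟩
      · exact absurd hj' (by simp)
      · exact ⟨j0, by simpa [Fin.succ_lt_succ_iff] using hj',
          by simpa [get_cons_succ'] using hj'2⟩
    · rintro ⟨h1, ⟨j', hj', hj'2⟩⟩
      refine ⟨h1, ⟨0, Fin.succ_pos i, by simp⟩,
        ⟨j'.succ, by simpa [Fin.succ_lt_succ_iff] using hj',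
          by simpa [get_cons_succ'] using hj'2⟩⟩

lemma g_cons2 (l : List ℕ) : g (2 :: l) = g l := by
  rw [g, g]
  simp only [List.length_cons]
  rw [ncard_fin_succ]
  split_ifs with h0
  · exact absurd h0.1 (by simp)
  · rw [zero_add]
    congr 1
    ext i
    simp only [Set.mem_setOf_eq, get_cons_succ']
    constructor
    · rintro ⟨h1, ⟨j', hj', hj'2⟩⟩
      refine ⟨h1, ?_⟩
      rcases Fin.eq_zero_or_eq_succ j' with rfl | ⟨j0, rfl⟩
      · exact absurd hj' (by simp)
      · exact ⟨j0, by simpa [Fin.succ_lt_succ_iff] using hj',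
          by simpa [get_cons_succ'] using hj'2⟩
    · rintro ⟨h1, ⟨j', hj', hj'2⟩⟩
      exact ⟨h1, ⟨j'.succ, by simpa [Fin.succ_lt_succ_iff] using hj',
        by simpa [get_cons_succ'] using hj'2⟩⟩

lemma g_cons1 (l : List ℕ) : g (1 :: l) = (if 2 ∈ l then 1 else 0) + g l := by
  classical
  rw [g, g]
  simp only [List.length_cons]
  rw [ncard_fin_succ]
  have hset : {i : Fin l.length | (1 :: l).get i.succ = 1 ∧
      ∃ j, i.succ < j ∧ (1 :: l).get j = 2} =
      {i : Fin l.length | l.get i = 1 ∧ ∃ j : Fin l.length, i < j ∧ l.get j = 2} := by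
    ext i
    simp only [Set.mem_setOf_eq, get_cons_succ']
    constructor
    · rintro ⟨h1, ⟨j', hj', hj'2⟩⟩
      refine ⟨h1, ?_⟩
      rcases Fin.eq_zero_or_eq_succ j' with rfl | ⟨j0, rfl⟩
      · exact absurd hj' (by simp)
      · exact ⟨j0, by simpa [Fin.succ_lt_succ_iff] using hj',
          by simpa [get_cons_succ'] using hj'2⟩
    · rintro ⟨h1, ⟨j', hj', hj'2⟩⟩
      exact ⟨h1, ⟨j'.succ, by simpa [Fin.succ_lt_succ_iff] using hj',
        by simpa [get_cons_succ'] using hj'2⟩⟩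
  rw [hset]
  congr 1
  split_ifs with h1 h2 h2
  · rfl
  · -- h1 : head cond true, h2 : ¬ 2 ∈ l : contradiction
    exfalso
    obtain ⟨-, j, hj, hj2⟩ := h1
    rcases Fin.eq_zero_or_eq_succ j with rfl | ⟨j0, rfl⟩
    · exact absurd hj (by simp)
    · exact h2 ((by simpa [get_cons_succ'] using hj2 : l.get j0 = 2) ▸ l.get_mem j0)
  · -- ¬cond but 2 ∈ l
    exfalso
    obtain ⟨j0, hj0⟩ := List.mem_iff_get.mp h2
    exact h1 ⟨rfl, ⟨j0.succ, Fin.succ_pos _, by simpa [get_cons_succ'] using hj0⟩⟩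
  · rfl

lemma g_no_two {l : List ℕ} (h : 2 ∉ l) : g l = 0 := by
  rw [g]
  have he : {i : Fin l.length | l.get i = 1 ∧ ∃ j : Fin l.length, i < j ∧ l.get j = 2}
      = (∅ : Set (Fin l.length)) := by
    ext i
    simp only [Set.mem_setOf_eq, Set.mem_empty_iff_false, iff_false]
    rintro ⟨-, j, -, hj2⟩
    exact h (hj2 ▸ l.get_mem j)
  rw [he, Set.ncard_empty]


/-! ### Sets of compositions -/

def CS (n : ℕ) : Set (List ℕ) := {l | Parts12 l ∧ l.sum = n}

def WS (n k : ℕ) : Set (List ℕ) := {l | Parts12 l ∧ l.sum = n ∧ waterCells l = k}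

def US (n k : ℕ) : Set (List ℕ) := {l | Parts12 l ∧ l.sum = n ∧ g l = k}

def US₂ (n k : ℕ) : Set (List ℕ) := {l | Parts12 l ∧ l.sum = n ∧ g l = k ∧ 2 ∈ l}

def TS (n k : ℕ) : Set (List ℕ) :=
  {l | Parts12 l ∧ l.sum = n ∧ (if 2 ∈ l then 1 else 0) + g l = k}

noncomputable def u (n k : ℕ) : ℕ := (US n k).ncard
noncomputable def u₂ (n k : ℕ) : ℕ := (US₂ n k).ncard

lemma parts12_cons {x : ℕ} {l : List ℕ} :
    Parts12 (x :: l) ↔ (x = 1 ∨ x = 2) ∧ Parts12 l := by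
  simp [Parts12]

lemma CS_zero : CS 0 = {[]} := by
  ext l
  simp only [CS, Set.mem_setOf_eq, Set.mem_singleton_iff]
  constructor
  · rintro ⟨hp, hs⟩
    cases l with
    | nil => rfl
    | cons x l' =>
      rcases hp x (List.mem_cons_self) with rfl | rfl <;> simp [List.sum_cons] at hs
  · rintro rfl; exact ⟨by simp [Parts12], rfl⟩

lemma CS_one : CS 1 = {[1]} := by
  ext l
  simp only [CS, Set.mem_setOf_eq, Set.mem_singleton_iff]
  constructor
  · rintro ⟨hp, hs⟩
    cases l with
    | nil => simp at hs
    | cons x l' =>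
      rcases hp x (List.mem_cons_self) with rfl | rfl
      · have hl' : l'.sum = 0 := by simp [List.sum_cons] at hs; omega
        have : l' ∈ CS 0 := ⟨fun y hy => hp y (List.mem_cons_of_mem _ hy), hl'⟩
        rw [CS_zero] at this
        simp at this
        rw [this]
      · exfalso; simp [List.sum_cons] at hs; omega
  · rintro rfl; exact ⟨by simp [Parts12], by simp⟩

lemma cons_decomp {n : ℕ} {l : List ℕ} (hp : Parts12 l) (hs : l.sum = n + 2) :
    (∃ l', Parts12 l' ∧ l'.sum = n + 1 ∧ l = 1 :: l') ∨
    (∃ l', Parts12 l' ∧ l'.sum = n ∧ l = 2 :: l') := by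
  cases l with
  | nil => simp at hs
  | cons x l' =>
    have hp' : Parts12 l' := fun y hy => hp y (List.mem_cons_of_mem _ hy)
    rcases hp x (List.mem_cons_self) with rfl | rfl
    · exact Or.inl ⟨l', hp', by simp [List.sum_cons] at hs; omega, rfl⟩
    · exact Or.inr ⟨l', hp', by simp [List.sum_cons] at hs; omega, rfl⟩

lemma CS_decomp (n : ℕ) :
    CS (n + 2) = (List.cons 1) '' CS (n + 1) ∪ (List.cons 2) '' CS n := by
  ext l
  simp only [CS, Set.mem_setOf_eq, Set.mem_union, Set.mem_image]
  constructor
  · rintro ⟨hp, hs⟩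
    rcases cons_decomp hp hs with ⟨l', h1, h2, rfl⟩ | ⟨l', h1, h2, rfl⟩
    · exact Or.inl ⟨l', ⟨h1, h2⟩, rfl⟩
    · exact Or.inr ⟨l', ⟨h1, h2⟩, rfl⟩
  · rintro (⟨l', ⟨h1, h2⟩, rfl⟩ | ⟨l', ⟨h1, h2⟩, rfl⟩)
    · exact ⟨parts12_cons.mpr ⟨Or.inl rfl, h1⟩, by simp [List.sum_cons, h2]; omega⟩
    · exact ⟨parts12_cons.mpr ⟨Or.inr rfl, h1⟩, by simp [List.sum_cons, h2]; omega⟩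

lemma CS_finite : ∀ n, (CS n).Finite := by
  intro n
  induction n using Nat.strong_induction_on with
  | _ n ih =>
    match n with
    | 0 => rw [CS_zero]; exact Set.finite_singleton _
    | 1 => rw [CS_one]; exact Set.finite_singleton _
    | (m + 2) =>
      rw [CS_decomp]
      exact ((ih (m+1) (by omega)).image _).union ((ih m (by omega)).image _)

lemma WS_subset (n k : ℕ) : WS n k ⊆ CS n := fun l hl => ⟨hl.1, hl.2.1⟩
lemma US_subset (n k : ℕ) : US n k ⊆ CS n := fun l hl => ⟨hl.1, hl.2.1⟩
lemma US₂_subset (n k : ℕ) : US₂ n k ⊆ CS n := fun l hl => ⟨hl.1, hl.2.1⟩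
lemma TS_subset (n k : ℕ) : TS n k ⊆ CS n := fun l hl => ⟨hl.1, hl.2.1⟩

lemma WS_finite (n k : ℕ) : (WS n k).Finite := (CS_finite n).subset (WS_subset n k)
lemma US_finite (n k : ℕ) : (US n k).Finite := (CS_finite n).subset (US_subset n k)
lemma US₂_finite (n k : ℕ) : (US₂ n k).Finite := (CS_finite n).subset (US₂_subset n k)
lemma TS_finite (n k : ℕ) : (TS n k).Finite := (CS_finite n).subset (TS_subset n k)

lemma w_eq (n k : ℕ) : w n k = (WS n k).ncard := rfl

lemma disj_cons12 (A B : Set (List ℕ)) :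
    Disjoint ((List.cons 1) '' A) ((List.cons 2) '' B) := by
  rw [Set.disjoint_left]
  rintro l ⟨a, -, rfl⟩ ⟨b, -, hb⟩
  simp at hb

/-! ### Decompositions of WS, US -/

lemma WS_decomp (n k : ℕ) :
    WS (n + 2) k = (List.cons 1) '' WS (n + 1) k ∪ (List.cons 2) '' US n k := by
  ext l
  simp only [WS, US, Set.mem_setOf_eq, Set.mem_union, Set.mem_image]
  constructor
  · rintro ⟨hp, hs, hw⟩
    rcases cons_decomp hp hs with ⟨l', h1, h2, rfl⟩ | ⟨l', h1, h2, rfl⟩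
    · rw [water_cons1] at hw
      exact Or.inl ⟨l', ⟨h1, h2, hw⟩, rfl⟩
    · rw [water_cons2] at hw
      exact Or.inr ⟨l', ⟨h1, h2, hw⟩, rfl⟩
  · rintro (⟨l', ⟨h1, h2, h3⟩, rfl⟩ | ⟨l', ⟨h1, h2, h3⟩, rfl⟩)
    · exact ⟨parts12_cons.mpr ⟨Or.inl rfl, h1⟩, by simp [List.sum_cons, h2]; omega,
        by rw [water_cons1]; exact h3⟩
    · exact ⟨parts12_cons.mpr ⟨Or.inr rfl, h1⟩, by simp [List.sum_cons, h2]; omega,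
        by rw [water_cons2]; exact h3⟩

lemma US_decomp (n k : ℕ) :
    US (n + 2) k = (List.cons 1) '' TS (n + 1) k ∪ (List.cons 2) '' US n k := by
  ext l
  simp only [US, TS, Set.mem_setOf_eq, Set.mem_union, Set.mem_image]
  constructor
  · rintro ⟨hp, hs, hw⟩
    rcases cons_decomp hp hs with ⟨l', h1, h2, rfl⟩ | ⟨l', h1, h2, rfl⟩
    · rw [g_cons1] at hw
      exact Or.inl ⟨l', ⟨h1, h2, hw⟩, rfl⟩
    · rw [g_cons2] at hw
      exact Or.inr ⟨l', ⟨h1, h2, hw⟩, rfl⟩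
  · rintro (⟨l', ⟨h1, h2, h3⟩, rfl⟩ | ⟨l', ⟨h1, h2, h3⟩, rfl⟩)
    · exact ⟨parts12_cons.mpr ⟨Or.inl rfl, h1⟩, by simp [List.sum_cons, h2]; omega,
        by rw [g_cons1]; exact h3⟩
    · exact ⟨parts12_cons.mpr ⟨Or.inr rfl, h1⟩, by simp [List.sum_cons, h2]; omega,
        by rw [g_cons2]; exact h3⟩

lemma no_two_eq_replicate {l : List ℕ} (hp : Parts12 l) (h2 : 2 ∉ l) :
    l = List.replicate l.sum 1 := by
  have hall : ∀ x ∈ l, x = 1 := by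
    intro x hx
    rcases hp x hx with rfl | rfl
    · rfl
    · exact absurd hx h2
  have hlen : l.sum = l.length := by
    induction l with
    | nil => simp
    | cons x l' ih =>
      rw [List.sum_cons, hall x (List.mem_cons_self)]
      rw [ih (fun y hy => hp y (List.mem_cons_of_mem _ hy))
        (fun hy => h2 (List.mem_cons_of_mem _ hy))
        (fun y hy => hall y (List.mem_cons_of_mem _ hy))]
      simp [List.length_cons]; omega
  rw [List.eq_replicate_iff]
  exact ⟨by omega, hall⟩

lemma replicate_mem_CS (m : ℕ) : Parts12 (List.replicate m 1) ∧
    (List.replicate m 1).sum = m := by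
  constructor
  · intro x hx
    rw [List.eq_of_mem_replicate hx]; exact Or.inl rfl
  · simp [List.sum_replicate]

lemma two_not_mem_replicate (m : ℕ) : 2 ∉ List.replicate m 1 := by
  intro h
  have := List.eq_of_mem_replicate h
  omega

lemma TS_zero (m : ℕ) : TS m 0 = {List.replicate m 1} := by
  ext l
  simp only [TS, Set.mem_setOf_eq, Set.mem_singleton_iff]
  constructor
  · rintro ⟨hp, hs, hw⟩
    have h2 : 2 ∉ l := by
      intro h; rw [if_pos h] at hw; omega
    rw [← hs]; exact no_two_eq_replicate hp h2
  · rintro rfl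
    obtain ⟨hp, hs⟩ := replicate_mem_CS m
    refine ⟨hp, hs, ?_⟩
    rw [if_neg (two_not_mem_replicate m), g_no_two (two_not_mem_replicate m)]

lemma TS_succ (m k : ℕ) : TS m (k + 1) = US₂ m k := by
  ext l
  simp only [TS, US₂, Set.mem_setOf_eq]
  constructor
  · rintro ⟨hp, hs, hw⟩
    have h2 : 2 ∈ l := by
      by_contra h
      rw [if_neg h, g_no_two h] at hw
      omega
    rw [if_pos h2] at hw
    exact ⟨hp, hs, by omega, h2⟩
  · rintro ⟨hp, hs, hg, h2⟩
    exact ⟨hp, hs, by rw [if_pos h2]; omega⟩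

lemma US_split_zero (m : ℕ) : US m 0 = US₂ m 0 ∪ {List.replicate m 1} := by
  ext l
  simp only [US, US₂, Set.mem_setOf_eq, Set.mem_union, Set.mem_singleton_iff]
  constructor
  · rintro ⟨hp, hs, hg⟩
    by_cases h2 : 2 ∈ l
    · exact Or.inl ⟨hp, hs, hg, h2⟩
    · exact Or.inr (by rw [← hs]; exact no_two_eq_replicate hp h2)
  · rintro (⟨hp, hs, hg, -⟩ | rfl)
    · exact ⟨hp, hs, hg⟩
    · obtain ⟨hp, hs⟩ := replicate_mem_CS m
      exact ⟨hp, hs, g_no_two (two_not_mem_replicate m)⟩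

lemma US_split_succ (m k : ℕ) : US m (k + 1) = US₂ m (k + 1) := by
  ext l
  simp only [US, US₂, Set.mem_setOf_eq]
  constructor
  · rintro ⟨hp, hs, hg⟩
    have h2 : 2 ∈ l := by
      by_contra h
      rw [g_no_two h] at hg
      omega
    exact ⟨hp, hs, hg, h2⟩
  · rintro ⟨hp, hs, hg, -⟩
    exact ⟨hp, hs, hg⟩

/-! ### Cardinality recurrences -/

lemma w_rec (n k : ℕ) : w (n + 2) k = w (n + 1) k + u n k := by
  rw [w_eq, WS_decomp, Set.ncard_union_eq (disj_cons12 _ _)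
    ((WS_finite _ _).image _) ((US_finite _ _).image _),
    Set.ncard_image_of_injective _ (List.cons_injective),
    Set.ncard_image_of_injective _ (List.cons_injective)]
  rfl

lemma u_rec_zero (n : ℕ) : u (n + 2) 0 = 1 + u n 0 := by
  rw [u, US_decomp, Set.ncard_union_eq (disj_cons12 _ _)
    ((TS_finite _ _).image _) ((US_finite _ _).image _),
    Set.ncard_image_of_injective _ (List.cons_injective),
    Set.ncard_image_of_injective _ (List.cons_injective), TS_zero]
  simp [u]

lemma u_rec_succ (n k : ℕ) : u (n + 2) (k + 1) = u₂ (n + 1) k + u n (k + 1) := by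
  rw [u, US_decomp, Set.ncard_union_eq (disj_cons12 _ _)
    ((TS_finite _ _).image _) ((US_finite _ _).image _),
    Set.ncard_image_of_injective _ (List.cons_injective),
    Set.ncard_image_of_injective _ (List.cons_injective), TS_succ]
  rfl

lemma u_split_zero (m : ℕ) : u m 0 = u₂ m 0 + 1 := by
  rw [u, US_split_zero, Set.ncard_union_eq _ (US₂_finite _ _) (Set.finite_singleton _),
    Set.ncard_singleton]
  · rfl
  · rw [Set.disjoint_right]
    rintro l rfl
    rintro ⟨-, -, -, h2⟩
    exact two_not_mem_replicate m h2

lemma u_split_succ (m k : ℕ) : u m (k + 1) = u₂ m (k + 1) := by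
  rw [u, US_split_succ]; rfl

/-! ### Base cases -/

lemma w_zero_zero : w 0 0 = 1 := by
  have : WS 0 0 = {[]} := by
    ext l
    simp only [WS, Set.mem_setOf_eq, Set.mem_singleton_iff]
    constructor
    · rintro ⟨hp, hs, -⟩
      have : l ∈ CS 0 := ⟨hp, hs⟩
      rwa [CS_zero] at this
    · rintro rfl
      exact ⟨by simp [Parts12], rfl, water_nil⟩
  rw [w_eq, this, Set.ncard_singleton]

lemma w_zero_succ (k : ℕ) : w 0 (k + 1) = 0 := by
  have : WS 0 (k + 1) = ∅ := by
    ext l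
    simp only [WS, Set.mem_setOf_eq, Set.mem_empty_iff_false, iff_false]
    rintro ⟨hp, hs, hw⟩
    have : l ∈ CS 0 := ⟨hp, hs⟩
    rw [CS_zero] at this
    rcases this with rfl
    rw [water_nil] at hw
    omega
  rw [w_eq, this, Set.ncard_empty]

lemma water_one : waterCells [1] = 0 := by
  rw [show ([1] : List ℕ) = 1 :: [] from rfl, water_cons1, water_nil]

lemma g_one : g [1] = 0 := by
  rw [show ([1] : List ℕ) = 1 :: [] from rfl, g_cons1, g_nil]
  simp

lemma w_one (k : ℕ) : w 1 k = w 0 k := by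
  cases k with
  | zero =>
    rw [w_zero_zero]
    have : WS 1 0 = {[1]} := by
      ext l
      simp only [WS, Set.mem_setOf_eq, Set.mem_singleton_iff]
      constructor
      · rintro ⟨hp, hs, -⟩
        have : l ∈ CS 1 := ⟨hp, hs⟩
        rwa [CS_one] at this
      · rintro rfl
        exact ⟨by simp [Parts12], by simp, water_one⟩
    rw [w_eq, this, Set.ncard_singleton]
  | succ k =>
    rw [w_zero_succ]
    have : WS 1 (k + 1) = ∅ := by
      ext l
      simp only [WS, Set.mem_setOf_eq, Set.mem_empty_iff_false, iff_false]
      rintro ⟨hp, hs, hw⟩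
      have : l ∈ CS 1 := ⟨hp, hs⟩
      rw [CS_one] at this
      rcases this with rfl
      rw [water_one] at hw
      omega
    rw [w_eq, this, Set.ncard_empty]

lemma u_zero_zero : u 0 0 = 1 := by
  have : US 0 0 = {[]} := by
    ext l
    simp only [US, Set.mem_setOf_eq, Set.mem_singleton_iff]
    constructor
    · rintro ⟨hp, hs, -⟩
      have : l ∈ CS 0 := ⟨hp, hs⟩
      rwa [CS_zero] at this
    · rintro rfl
      exact ⟨by simp [Parts12], rfl, g_nil⟩
  rw [u, this, Set.ncard_singleton]

lemma u_zero_succ (k : ℕ) : u 0 (k + 1) = 0 := by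
  have : US 0 (k + 1) = ∅ := by
    ext l
    simp only [US, Set.mem_setOf_eq, Set.mem_empty_iff_false, iff_false]
    rintro ⟨hp, hs, hg⟩
    have : l ∈ CS 0 := ⟨hp, hs⟩
    rw [CS_zero] at this
    rcases this with rfl
    rw [g_nil] at hg
    omega
  rw [u, this, Set.ncard_empty]

lemma u_one_zero : u 1 0 = 1 := by
  have : US 1 0 = {[1]} := by
    ext l
    simp only [US, Set.mem_setOf_eq, Set.mem_singleton_iff]
    constructor
    · rintro ⟨hp, hs, -⟩
      have : l ∈ CS 1 := ⟨hp, hs⟩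
      rwa [CS_one] at this
    · rintro rfl
      exact ⟨by simp [Parts12], by simp, g_one⟩
  rw [u, this, Set.ncard_singleton]

lemma u_one_succ (k : ℕ) : u 1 (k + 1) = 0 := by
  have : US 1 (k + 1) = ∅ := by
    ext l
    simp only [US, Set.mem_setOf_eq, Set.mem_empty_iff_false, iff_false]
    rintro ⟨hp, hs, hg⟩
    have : l ∈ CS 1 := ⟨hp, hs⟩
    rw [CS_one] at this
    rcases this with rfl
    rw [g_one] at hg
    omega
  rw [u, this, Set.ncard_empty]

lemma u₂_zero (k : ℕ) : u₂ 0 k = 0 := by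
  have : US₂ 0 k = ∅ := by
    ext l
    simp only [US₂, Set.mem_setOf_eq, Set.mem_empty_iff_false, iff_false]
    rintro ⟨hp, hs, -, h2⟩
    have : l ∈ CS 0 := ⟨hp, hs⟩
    rw [CS_zero] at this
    rcases this with rfl
    simp at h2
  rw [u₂, this, Set.ncard_empty]

/-- unified successor recurrence. -/
lemma u_succ_succ (n k : ℕ) : u (n + 1) (k + 1) = u₂ n k + u (n - 1) (k + 1) := by
  cases n with
  | zero => rw [u_one_succ, u₂_zero]; simp [u_zero_succ]
  | succ m => rw [u_rec_succ]; rfl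

/-! ### Sums -/

noncomputable def e (n : ℕ) : ℕ := ∑ k ∈ Finset.range (n + 1), u (n - k) k

lemma e_zero : e 0 = 1 := by simp [e, u_zero_zero]

lemma e_one : e 1 = 1 := by
  rw [e]
  rw [Finset.sum_range_succ, Finset.sum_range_succ, Finset.sum_range_zero]
  simp [u_one_zero, u_zero_succ]

lemma e_split (n : ℕ) :
    e n = (∑ k ∈ Finset.range (n + 1), u₂ (n - k) k) + 1 := by
  rw [e, Finset.sum_range_succ', Finset.sum_range_succ']
  have hs : ∑ k ∈ Finset.range n, u (n - (k + 1)) (k + 1)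
      = ∑ k ∈ Finset.range n, u₂ (n - (k + 1)) (k + 1) :=
    Finset.sum_congr rfl (fun k _ => u_split_succ _ _)
  have h0 := u_split_zero (n - 0)
  omega

lemma e_shift (n : ℕ) :
    e n = (∑ k ∈ Finset.range (n + 1), u (n - (k + 1)) (k + 1)) + u n 0 := by
  rw [e, Finset.sum_range_succ', Nat.sub_zero]
  congr 1
  rw [Finset.sum_range_succ]
  have : u (n - (n + 1)) (n + 1) = 0 := by
    rw [Nat.sub_eq_zero_of_le (by omega), u_zero_succ]
  rw [this, add_zero]

lemma e_rec (n : ℕ) : e (n + 2) = 2 * e n := by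
  have step1 : e (n + 2) =
      (∑ k ∈ Finset.range (n + 1), u (n + 2 - (k + 1)) (k + 1)) + u (n + 2) 0 := by
    rw [e, Finset.sum_range_succ', Nat.sub_zero]
    congr 1
    rw [Finset.sum_range_succ]
    have : u (n + 2 - (n + 1 + 1)) (n + 1 + 1) = 0 := by
      simp [u_zero_succ]
    rw [this, add_zero]
  have step2 : ∀ k ∈ Finset.range (n + 1),
      u (n + 2 - (k + 1)) (k + 1) = u₂ (n - k) k + u (n - (k + 1)) (k + 1) := by
    intro k hk
    rw [Finset.mem_range] at hk
    have h1 : n + 2 - (k + 1) = (n - k) + 1 := by omega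
    have h2 : (n - k) - 1 = n - (k + 1) := by omega
    rw [h1, u_succ_succ, h2]
  rw [step1, Finset.sum_congr rfl step2, Finset.sum_add_distrib, u_rec_zero]
  have hA := e_split n
  have hB := e_shift n
  omega

lemma d_zero : d 0 = 1 := by simp [d, w_zero_zero]

lemma d_one : d 1 = 1 := by
  rw [d, Finset.sum_range_succ, Finset.sum_range_succ, Finset.sum_range_zero]
  simp [w_one, w_zero_zero, w_zero_succ]

lemma d_shift (n : ℕ) :
    d (n + 1) = ∑ k ∈ Finset.range (n + 1), w (n + 1 - k) k := by
  rw [d, Finset.sum_range_succ]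
  have : w (n + 1 - (n + 1)) (n + 1) = 0 := by simp [w_zero_succ]
  rw [this, add_zero]

lemma d_rec (n : ℕ) : d (n + 2) = d (n + 1) + e n := by
  have step1 : d (n + 2) = ∑ k ∈ Finset.range (n + 1), w (n + 2 - k) k := by
    rw [d, Finset.sum_range_succ, Finset.sum_range_succ]
    have h1 : w (n + 2 - (n + 2)) (n + 2) = 0 := by simp [w_zero_succ]
    have h2 : w (n + 2 - (n + 1)) (n + 1) = 0 := by
      have : n + 2 - (n + 1) = 1 := by omega
      rw [this, w_one, w_zero_succ]
    rw [h1, h2, add_zero, add_zero]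
  have step2 : ∀ k ∈ Finset.range (n + 1),
      w (n + 2 - k) k = w (n + 1 - k) k + u (n - k) k := by
    intro k hk
    rw [Finset.mem_range] at hk
    have h1 : n + 2 - k = (n - k) + 2 := by omega
    have h2 : (n - k) + 1 = n + 1 - k := by omega
    rw [h1, w_rec, h2]
  rw [step1, Finset.sum_congr rfl step2, Finset.sum_add_distrib, ← d_shift, ← e]

lemma d_two : d 2 = 2 := by
  have h := d_rec 0
  norm_num [d_one, e_zero] at h
  exact h

lemma d_three : d 3 = 3 := by
  have h := d_rec 1
  norm_num [d_two, e_one] at h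
  exact h

lemma d_key (n : ℕ) : d (n + 4) + 2 * d (n + 1) = d (n + 3) + 2 * d (n + 2) := by
  have h1 := d_rec (n + 2)
  simp only [show n + 2 + 2 = n + 4 from by omega, show n + 2 + 1 = n + 3 from by omega] at h1
  have h2 := d_rec n
  have h3 := e_rec n
  omega

/-! ### The power series identity -/

theorem stmt15 :
    PowerSeries.mk (fun n => (d n : ℚ)) =
      (1 - q ^ 2 + q ^ 3) * (1 - q - 2 * q ^ 2 + 2 * q ^ 3)⁻¹ := by
  have hc : PowerSeries.constantCoeff (1 - q - 2 * q ^ 2 + 2 * q ^ 3) ≠ 0 := by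
    simp [q]
  rw [PowerSeries.eq_mul_inv_iff_mul_eq hc]
  have hden : (1 - q - 2 * q ^ 2 + 2 * q ^ 3 : PowerSeries ℚ) =
      1 - PowerSeries.X - PowerSeries.C (2 : ℚ) * PowerSeries.X ^ 2
        + PowerSeries.C (2 : ℚ) * PowerSeries.X ^ 3 := by
    rw [q, map_ofNat]
  rw [hden]
  ext n
  have hexp : (PowerSeries.mk (fun n => (d n : ℚ))) * (1 - PowerSeries.X
        - PowerSeries.C (2 : ℚ) * PowerSeries.X ^ 2
        + PowerSeries.C (2 : ℚ) * PowerSeries.X ^ 3)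
      = PowerSeries.mk (fun n => (d n : ℚ))
        - PowerSeries.mk (fun n => (d n : ℚ)) * PowerSeries.X ^ 1
        - PowerSeries.C (2 : ℚ) * (PowerSeries.mk (fun n => (d n : ℚ)) * PowerSeries.X ^ 2)
        + PowerSeries.C (2 : ℚ) * (PowerSeries.mk (fun n => (d n : ℚ)) * PowerSeries.X ^ 3) := by
    ring
  rw [hexp]
  rw [q]
  simp only [map_add, map_sub, PowerSeries.coeff_C_mul, PowerSeries.coeff_mul_X_pow',
    PowerSeries.coeff_mk, PowerSeries.coeff_one, PowerSeries.coeff_X_pow]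
  match n with
  | 0 => norm_num [d_zero]
  | 1 => norm_num [d_zero, d_one]
  | 2 => norm_num [d_zero, d_one, d_two]
  | 3 => norm_num [d_zero, d_one, d_two, d_three]
  | (m + 4) =>
    have h1 : (1 : ℕ) ≤ m + 4 := by omega
    have h2 : (2 : ℕ) ≤ m + 4 := by omega
    have h3 : (3 : ℕ) ≤ m + 4 := by omega
    have hne0 : ¬ (m + 4 = 0) := by omega
    have hne2 : ¬ (m + 4 = 2) := by omega
    have hne3 : ¬ (m + 4 = 3) := by omega
    rw [if_pos h1, if_pos h2, if_pos h3, if_neg hne0, if_neg hne2, if_neg hne3]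
    have key := d_key m
    have : m + 4 - 1 = m + 3 := by omega
    rw [this]
    have : m + 4 - 2 = m + 2 := by omega
    rw [this]
    have : m + 4 - 3 = m + 1 := by omega
    rw [this]
    have key' : ((d (m + 4) : ℚ)) + 2 * d (m + 1) = d (m + 3) + 2 * d (m + 2) := by
      exact_mod_cast d_key m
    push_cast
    linarith [key']
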